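/- arXiv:1205.6617 — 4 statements merged into one kernel-verified Lean document; each statement's English description precedes it below -/
import Mathlib

section
/- Fix σ² ∈ [C⁻², C²] with C > 1. Define f(x) = ln x + σ²/x − ln σ² − 1 for x > 0. Then for all x ∈ [C⁻², C²], f(x) ≥ (1/(4C⁴)) (x − σ²)². -/
open Real Set

private noncomputable def gA (t : ℝ) : ℝ := Real.log t + 1/t - 1 - (t-1)^2/(2*t^2)

private lemma gA_deriv (t : ℝ) (ht : 0 < t) : HasDerivAt gA ((t-1)^2/t^3) t := by
  have h1 : HasDerivAt Real.log t⁻¹ t := Real.hasDerivAt_log ht.ne'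
  have h2 : HasDerivAt (fun t : ℝ => 1/t) (-(t^2)⁻¹) t := by
    simpa [one_div] using hasDerivAt_inv ht.ne'
  have hn : HasDerivAt (fun t : ℝ => (t-1)^2) (2*(t-1)) t := by
    have := ((hasDerivAt_id t).sub_const 1).fun_pow 2
    simpa [mul_comm] using this
  have hd : HasDerivAt (fun t : ℝ => 2*t^2) (2*(2*t)) t := by
    simpa using ((hasDerivAt_pow 2 t).const_mul 2)
  have hden : (2*t^2) ≠ 0 := by positivity
  have h3 := hn.div hd hden
  have h : HasDerivAt gA _ t := ((h1.add h2).sub_const 1).sub h3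
  convert h using 1
  field_simp
  ring

private lemma auxA {t : ℝ} (ht : 1 ≤ t) : (t-1)^2/(2*t^2) ≤ Real.log t + 1/t - 1 := by
  have hmono : MonotoneOn gA (Ici 1) := by
    apply monotoneOn_of_deriv_nonneg (convex_Ici 1)
    · intro x hx
      exact ((gA_deriv x (lt_of_lt_of_le one_pos hx)).differentiableAt).continuousAt.continuousWithinAt
    · intro x hx
      rw [interior_Ici] at hx
      exact ((gA_deriv x (lt_trans one_pos hx)).differentiableAt).differentiableWithinAt
    · intro x hx
      rw [interior_Ici] at hx
      have hx0 : 0 < x := lt_trans one_pos hx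
      rw [(gA_deriv x hx0).deriv]
      positivity
  have h0 : gA 1 = 0 := by simp [gA]
  have := hmono (mem_Ici.mpr le_rfl) (mem_Ici.mpr ht) ht
  rw [h0] at this
  have : 0 ≤ gA t := this
  simpa [gA, sub_nonneg] using this

private noncomputable def gB (t : ℝ) : ℝ := Real.log t + 1/t - 1 - (t-1)^2/2

private lemma gB_deriv (t : ℝ) (ht : 0 < t) : HasDerivAt gB (-((t-1)^2*(t+1)/t^2)) t := by
  have h1 : HasDerivAt Real.log t⁻¹ t := Real.hasDerivAt_log ht.ne'
  have h2 : HasDerivAt (fun t : ℝ => 1/t) (-(t^2)⁻¹) t := by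
    simpa [one_div] using hasDerivAt_inv ht.ne'
  have hn : HasDerivAt (fun t : ℝ => (t-1)^2/2) ((2*(t-1))/2) t := by
    have := (((hasDerivAt_id t).sub_const 1).pow 2).div_const 2
    simpa [mul_comm] using this
  have h : HasDerivAt gB _ t := ((h1.add h2).sub_const 1).sub hn
  convert h using 1
  field_simp
  ring

private lemma auxB {t : ℝ} (ht0 : 0 < t) (ht : t ≤ 1) : (t-1)^2/2 ≤ Real.log t + 1/t - 1 := by
  have hanti : AntitoneOn gB (Ioc 0 1) := by
    apply antitoneOn_of_deriv_nonpos (convex_Ioc 0 1)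
    · intro x hx
      exact ((gB_deriv x hx.1).differentiableAt).continuousAt.continuousWithinAt
    · intro x hx
      rw [interior_Ioc] at hx
      exact ((gB_deriv x hx.1).differentiableAt).differentiableWithinAt
    · intro x hx
      rw [interior_Ioc] at hx
      have hx0 : 0 < x := hx.1
      rw [(gB_deriv x hx0).deriv]
      have : 0 ≤ (x-1)^2*(x+1)/x^2 := by positivity
      linarith
  have h0 : gB 1 = 0 := by simp [gB]
  have := hanti (mem_Ioc.mpr ⟨ht0, ht⟩) (mem_Ioc.mpr ⟨one_pos, le_rfl⟩) ht
  rw [h0] at this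
  have : 0 ≤ gB t := this
  simpa [gB, sub_nonneg] using this

theorem log_quadratic_lower_bound (C σ2 : ℝ) (hC : 1 < C)
    (hσl : C⁻¹ ^ 2 ≤ σ2) (hσu : σ2 ≤ C ^ 2) :
    ∀ x : ℝ, C⁻¹ ^ 2 ≤ x → x ≤ C ^ 2 →
      (1 / (4 * C ^ 4)) * (x - σ2) ^ 2 ≤ Real.log x + σ2 / x - Real.log σ2 - 1 := by
  intro x hx1 hx2
  have hC0 : 0 < C := lt_trans one_pos hC
  have hCi : (0:ℝ) < C⁻¹ ^ 2 := by positivity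
  have hσ0 : 0 < σ2 := lt_of_lt_of_le hCi hσl
  have hx0 : 0 < x := lt_of_lt_of_le hCi hx1
  have hC4 : (0:ℝ) < C ^ 4 := by positivity
  set t : ℝ := x / σ2 with ht_def
  have ht0 : 0 < t := div_pos hx0 hσ0
  have hlog : Real.log t = Real.log x - Real.log σ2 := Real.log_div hx0.ne' hσ0.ne'
  have hinv : 1 / t = σ2 / x := one_div_div x σ2
  have hsub : t - 1 = (x - σ2) / σ2 := by
    rw [ht_def]; field_simp
  rcases le_or_gt σ2 x with hcase | hcase
  · -- t ≥ 1, use auxA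
    have ht1 : 1 ≤ t := (one_le_div hσ0).mpr hcase
    have h := auxA ht1
    rw [hlog, hinv, hsub] at h
    have heq : ((x - σ2)/σ2)^2 / (2 * t^2) = (x - σ2)^2 / (2 * x^2) := by
      rw [ht_def, div_pow, div_pow]
      field_simp
    rw [heq] at h
    have hxC : x^2 ≤ C^4 := by nlinarith
    have hb : 1 / (4 * C ^ 4) * (x - σ2) ^ 2 ≤ (x - σ2) ^ 2 / (2 * x ^ 2) := by
      rw [div_mul_eq_mul_div, div_le_div_iff₀ (by positivity) (by positivity)]
      nlinarith [sq_nonneg (x - σ2)]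
    linarith
  · -- t ≤ 1, use auxB
    have ht1 : t ≤ 1 := (div_le_one hσ0).mpr hcase.le
    have h := auxB ht0 ht1
    rw [hlog, hinv, hsub] at h
    have heq : ((x - σ2)/σ2)^2 / 2 = (x - σ2)^2 / (2 * σ2^2) := by
      rw [div_pow, div_div, mul_comm]
    rw [heq] at h
    have hsC : σ2^2 ≤ C^4 := by nlinarith
    have hb : 1 / (4 * C ^ 4) * (x - σ2) ^ 2 ≤ (x - σ2) ^ 2 / (2 * σ2 ^ 2) := by
      rw [div_mul_eq_mul_div, div_le_div_iff₀ (by positivity) (by positivity)]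
      nlinarith [sq_nonneg (x - σ2)]
    linarith
end

section
/- Let Σ_ee be N×N positive definite, Λ* an N×r matrix, M* an r×r positive semidefinite matrix, and Λ an N×r matrix with Λ'Σ_ee⁻¹Λ positive definite. Then the r×r matrix M* Λ*' Σ_ee⁻¹ Λ* − M* Λ*' Σ_ee⁻¹ Λ (Λ'Σ_ee⁻¹Λ)⁻¹ Λ' Σ_ee⁻¹ Λ* has nonnegative trace. -/
open Matrix
open scoped MatrixOrder

lemma psd_trace_nonneg {n : ℕ} {A : Matrix (Fin n) (Fin n) ℝ} (h : A.PosSemidef) :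
    0 ≤ A.trace := by
  rw [Matrix.trace]
  apply Finset.sum_nonneg
  intro i _
  have := h.diag_nonneg (i := i)
  simpa [dotProduct, Matrix.mulVec, Pi.single_apply] using this

theorem trace_projection_residual_nonneg {N r : ℕ}
    (See : Matrix (Fin N) (Fin N) ℝ) (Λstar Λ : Matrix (Fin N) (Fin r) ℝ)
    (Mstar : Matrix (Fin r) (Fin r) ℝ)
    (hS : See.PosDef) (hM : Mstar.PosSemidef) (hΛ : (Λᵀ * See⁻¹ * Λ).PosDef) :
    0 ≤ (Mstar * Λstarᵀ * See⁻¹ * Λstar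
        - Mstar * Λstarᵀ * See⁻¹ * Λ * (Λᵀ * See⁻¹ * Λ)⁻¹ * Λᵀ * See⁻¹ * Λstar).trace := by
  have hP : (See⁻¹).PosDef := hS.inv
  set S := CFC.sqrt (See⁻¹) with hSdef
  have hSsq : S * S = See⁻¹ := CFC.sqrt_mul_sqrt_self _ hP.posSemidef.nonneg
  have hShermit : S.IsHermitian := (CFC.sqrt_nonneg _).posSemidef.1
  have hStrans : Sᵀ = S := by
    have := hShermit
    rwa [Matrix.IsHermitian, Matrix.conjTranspose_eq_transpose_of_trivial] at this
  set B := Λᵀ * See⁻¹ * Λ with hBdef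
  set C := S * Λstar with hCdef
  set D := S * Λ with hDdef
  have hDB : Dᵀ * D = B := by
    rw [hDdef, Matrix.transpose_mul, hStrans, hBdef, Matrix.mul_assoc, ← Matrix.mul_assoc S,
      hSsq, Matrix.mul_assoc]
  have hBinvT : B⁻¹ᵀ = B⁻¹ := by
    rw [Matrix.transpose_nonsing_inv]
    congr 1
    have := hΛ.1
    rwa [Matrix.IsHermitian, Matrix.conjTranspose_eq_transpose_of_trivial] at this
  have hBunit : IsUnit B := hΛ.isUnit
  have hBBinv : B * B⁻¹ = 1 := Matrix.mul_nonsing_inv _ (Matrix.isUnit_iff_isUnit_det _ |>.1 hBunit)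
  set E := C - D * B⁻¹ * Dᵀ * C with hEdef
  have hCC : Cᵀ * C = Λstarᵀ * See⁻¹ * Λstar := by
    rw [hCdef, Matrix.transpose_mul, hStrans, Matrix.mul_assoc, ← Matrix.mul_assoc S, hSsq,
      Matrix.mul_assoc]
  have hCD : Cᵀ * D = Λstarᵀ * See⁻¹ * Λ := by
    rw [hCdef, hDdef, Matrix.transpose_mul, hStrans, Matrix.mul_assoc, ← Matrix.mul_assoc S, hSsq,
      Matrix.mul_assoc]
  have hDC : Dᵀ * C = Λᵀ * See⁻¹ * Λstar := by
    rw [hCdef, hDdef, Matrix.transpose_mul, hStrans, Matrix.mul_assoc, ← Matrix.mul_assoc S, hSsq,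
      Matrix.mul_assoc]
  have key : Eᵀ * E = Λstarᵀ * See⁻¹ * Λstar
      - Λstarᵀ * See⁻¹ * Λ * B⁻¹ * Λᵀ * See⁻¹ * Λstar := by
    have hET : Eᵀ = Cᵀ - Cᵀ * D * B⁻¹ * Dᵀ := by
      rw [hEdef, Matrix.transpose_sub]
      congr 1
      simp only [Matrix.transpose_mul, hBinvT, Matrix.transpose_transpose, Matrix.mul_assoc]
    rw [hET, hEdef, Matrix.sub_mul, Matrix.mul_sub, Matrix.mul_sub]
    have h4 : Cᵀ * D * B⁻¹ * Dᵀ * (D * B⁻¹ * Dᵀ * C) = Cᵀ * D * B⁻¹ * (Dᵀ * C) := by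
      calc Cᵀ * D * B⁻¹ * Dᵀ * (D * B⁻¹ * Dᵀ * C)
          = Cᵀ * D * (B⁻¹ * (Dᵀ * D) * B⁻¹) * (Dᵀ * C) := by
            simp only [Matrix.mul_assoc]
        _ = Cᵀ * D * B⁻¹ * (Dᵀ * C) := by
            rw [hDB, Matrix.mul_assoc B⁻¹, hBBinv, Matrix.mul_one]
    have h2 : Cᵀ * (D * B⁻¹ * Dᵀ * C) = Cᵀ * D * B⁻¹ * (Dᵀ * C) := by
      simp only [Matrix.mul_assoc]
    have h3 : Cᵀ * D * B⁻¹ * Dᵀ * C = Cᵀ * D * B⁻¹ * (Dᵀ * C) := by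
      simp only [Matrix.mul_assoc]
    rw [h4, h2, h3, sub_sub_sub_cancel_right, hCC, hCD, hDC]
    simp only [Matrix.mul_assoc]
  have hexpr : Mstar * Λstarᵀ * See⁻¹ * Λstar
      - Mstar * Λstarᵀ * See⁻¹ * Λ * (Λᵀ * See⁻¹ * Λ)⁻¹ * Λᵀ * See⁻¹ * Λstar
      = Mstar * (Eᵀ * E) := by
    rw [key, Matrix.mul_sub, ← hBdef]
    simp only [Matrix.mul_assoc]
  rw [hexpr]
  have htr : (Mstar * (Eᵀ * E)).trace = (E * Mstar * Eᵀ).trace := by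
    rw [Matrix.trace_mul_comm, Matrix.mul_assoc, Matrix.trace_mul_comm, Matrix.mul_assoc]
  rw [htr]
  apply psd_trace_nonneg
  have := hM.mul_mul_conjTranspose_same E
  rwa [Matrix.conjTranspose_eq_transpose_of_trivial] at this
end

section
/- Let P be a positive definite r×r matrix and A an r×r matrix. If the quadratic form A' P A − P A is zero (i.e., P A = A' P A) and I_r − A is invertible, then A = 0. -/
open Matrix

theorem ic1_identification {r : ℕ} (P A : Matrix (Fin r) (Fin r) ℝ)
    (hP : P.PosDef) (h : P * A = Aᵀ * P * A)
    (hinv : IsUnit ((1 : Matrix (Fin r) (Fin r) ℝ) - A)) :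
    A = 0 := by
  have hPsym : Pᵀ = P := hP.isHermitian
  have h2 : Aᵀ * P = P * A := by
    have := congrArg Matrix.transpose h
    simp only [Matrix.transpose_mul, Matrix.transpose_transpose, hPsym] at this
    rw [this, ← Matrix.mul_assoc, h]
  have h3 : P * A * ((1 : Matrix (Fin r) (Fin r) ℝ) - A) = 0 := by
    have hPA2 : P * A * A = P * A := by
      conv_lhs => rw [← h2]
      exact h.symm
    rw [Matrix.mul_sub, Matrix.mul_one, hPA2, sub_self]
  obtain ⟨u, hu⟩ := hinv
  rw [← hu] at h3
  have h4 : P * A = 0 := by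
    have := congrArg (· * (↑u⁻¹ : Matrix (Fin r) (Fin r) ℝ)) h3
    simp only [zero_mul] at this
    rwa [Matrix.mul_assoc, Matrix.mul_assoc, u.mul_inv, Matrix.mul_one] at this
  obtain ⟨v, hv⟩ := hP.isUnit
  rw [← hv] at h4
  have := congrArg ((↑v⁻¹ : Matrix (Fin r) (Fin r) ℝ) * ·) h4
  simp only [mul_zero] at this
  rwa [← Matrix.mul_assoc, v.inv_mul, Matrix.one_mul] at this
end

section
/- Let U be an r×r real upper triangular matrix and let D₁, D₂ be r×r diagonal matrices with strictly positive diagonal entries such that U' D₁ U = D₂. Then U is diagonal. -/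
open Matrix

theorem upper_triangular_diag_congruence_is_diag {r : ℕ}
    (U : Matrix (Fin r) (Fin r) ℝ) (d₁ d₂ : Fin r → ℝ)
    (hU : ∀ i j : Fin r, j < i → U i j = 0)
    (hd₁ : ∀ i, 0 < d₁ i) (hd₂ : ∀ i, 0 < d₂ i)
    (h : Uᵀ * Matrix.diagonal d₁ * U = Matrix.diagonal d₂) :
    ∀ i j : Fin r, i ≠ j → U i j = 0 := by
  have key : ∀ i j : Fin r, (∑ k, d₁ k * U k i * U k j) = Matrix.diagonal d₂ i j := by
    intro i j
    rw [← h, Matrix.mul_assoc]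
    simp only [Matrix.mul_apply, Matrix.transpose_apply, Matrix.diagonal_apply, ite_mul,
      zero_mul, Finset.sum_ite_eq, Finset.mem_univ, if_true]
    exact Finset.sum_congr rfl (fun k _ => by ring)
  suffices H : ∀ n : ℕ, ∀ i : Fin r, i.val = n → ∀ j, i ≠ j → U i j = 0 by
    intro i j hij
    exact H i.val i rfl j hij
  intro n
  induction n using Nat.strong_induction_on with
  | _ n IH =>
    intro i hi j hij
    have hrow : ∀ k : Fin r, k < i → ∀ j', k ≠ j' → U k j' = 0 := by
      intro k hk j' hkj'
      exact IH k.val (hi ▸ hk) k rfl j' hkj'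
    -- first: U i i ≠ 0
    have hdiag : d₁ i * U i i * U i i = d₂ i := by
      have := key i i
      rw [Matrix.diagonal_apply_eq] at this
      rw [← this]
      symm
      apply Finset.sum_eq_single
      · intro k _ hk
        rcases lt_or_gt_of_ne hk with hlt | hgt
        · rw [hrow k hlt i hk]; ring
        · rw [hU k i hgt]; ring
      · intro hmem; exact absurd (Finset.mem_univ i) hmem
    have hUii : U i i ≠ 0 := by
      intro h0
      rw [h0] at hdiag
      have := hd₂ i
      simp at hdiag
      linarith
    rcases lt_or_gt_of_ne hij with hlt | hgt
    · -- i < j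
      have hoff : d₁ i * U i i * U i j = 0 := by
        have := key i j
        rw [Matrix.diagonal_apply_ne _ hij] at this
        rw [← this]
        symm
        apply Finset.sum_eq_single
        · intro k _ hk
          rcases lt_or_gt_of_ne hk with hklt | hkgt
          · rw [hrow k hklt j (ne_of_lt (hklt.trans hlt))]; ring
          · rw [hU k i hkgt]; ring
        · intro hmem; exact absurd (Finset.mem_univ i) hmem
      have hd := (hd₁ i).ne'
      have : U i j = 0 := by
        rcases mul_eq_zero.mp hoff with h1 | h2
        · rcases mul_eq_zero.mp h1 with h3 | h4
          · exact absurd h3 hd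
          · exact absurd h4 hUii
        · exact h2
      exact this
    · exact hU i j hgt
end
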